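/- arXiv:0704.3238 — 7 statements merged into one kernel-verified Lean document; each statement's English description precedes it below -/
import Mathlib

section
/- For every k ≥ 1 (with agents 0,…,k ∈ Agt), the alternative axiom schema for independence of agents (AAIA_k), namely ◇φ → ⟨k⟩⋀_{0 ≤ i < k}⟨i⟩φ, is valid in BT+AC structures: every instance is true at every index w/h of every BT+AC model. -/
/-! Common infrastructure for STIT logic (Chellas STIT, deliberative STIT,
historic necessity), following Balbiani, Herzig & Troquard,
"Alternative axiomatics and complexity of deliberative STIT theories". -/

namespace STIT

/-- Formulas of the (combined) STIT language, over a countable set of atoms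
(indexed by `ℕ`) and agents indexed by `ℕ` (the actual agent set `Agt` is an
initial segment of `ℕ`).  `cstit i` is the Chellas STIT operator `[i]`,
`dstit i` is the deliberative STIT operator `[i dstit: ·]`, and `box` is the
historic necessity operator `□`. -/
inductive Fml : Type
  | atm : ℕ → Fml
  | neg : Fml → Fml
  | and : Fml → Fml → Fml
  | cstit : ℕ → Fml → Fml
  | dstit : ℕ → Fml → Fml
  | box : Fml → Fml
  deriving DecidableEq

/-- Material implication `φ → ψ`, as the abbreviation `¬(φ ∧ ¬ψ)`. -/
def impF (φ ψ : Fml) : Fml := .neg (.and φ (.neg ψ))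

/-- Disjunction `φ ∨ ψ`, as the abbreviation `¬(¬φ ∧ ¬ψ)`. -/
def orF (φ ψ : Fml) : Fml := .neg (.and (.neg φ) (.neg ψ))

/-- Biimplication `φ ↔ ψ`, as the abbreviation `(φ → ψ) ∧ (ψ → φ)`. -/
def iffF (φ ψ : Fml) : Fml := .and (impF φ ψ) (impF ψ φ)

/-- `◇φ`, abbreviating `¬□¬φ`. -/
def diaF (φ : Fml) : Fml := .neg (.box (.neg φ))

/-- `⟨i⟩φ`, abbreviating `¬[i]¬φ`. -/
def posF (i : ℕ) (φ : Fml) : Fml := .neg (.cstit i (.neg φ))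

/-- Conjunction of a (finite) list of formulas; the empty conjunction is a
tautology `⊤`. -/
def conjF : List Fml → Fml
  | [] => impF (.atm 0) (.atm 0)
  | [φ] => φ
  | φ :: l => .and φ (conjF l)

/-- The length `‖φ‖` of a formula. -/
def len : Fml → ℕ
  | .atm _ => 1
  | .neg φ => 1 + len φ
  | .and φ ψ => 3 + len φ + len ψ
  | .cstit _ φ => 3 + len φ
  | .dstit _ φ => 5 + len φ
  | .box φ => 1 + len φ

/-- The set `sf φ` of subformulas of `φ`. -/
def sf : Fml → Finset Fml
  | .atm p => {.atm p}
  | .neg φ => insert (.neg φ) (sf φ)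
  | .and φ ψ => insert (.and φ ψ) (sf φ ∪ sf ψ)
  | .cstit i φ => insert (.cstit i φ) (sf φ)
  | .dstit i φ => insert (.dstit i φ) (sf φ)
  | .box φ => insert (.box φ) (sf φ)

/-- The set of atoms occurring in a formula. -/
def atoms : Fml → Finset ℕ
  | .atm p => {p}
  | .neg φ => atoms φ
  | .and φ ψ => atoms φ ∪ atoms ψ
  | .cstit _ φ => atoms φ
  | .dstit _ φ => atoms φ
  | .box φ => atoms φ

/-- `φ` contains no deliberative STIT operator (so `φ` belongs to `L_CSTIT`
when it moreover only uses box/cstit). -/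
def NoDstit : Fml → Prop
  | .atm _ => True
  | .neg φ => NoDstit φ
  | .and φ ψ => NoDstit φ ∧ NoDstit ψ
  | .cstit _ φ => NoDstit φ
  | .dstit _ _ => False
  | .box φ => NoDstit φ

/-- `φ` contains no Chellas STIT operator (so `φ` belongs to `L_DSTIT`). -/
def NoCstit : Fml → Prop
  | .atm _ => True
  | .neg φ => NoCstit φ
  | .and φ ψ => NoCstit φ ∧ NoCstit ψ
  | .cstit _ _ => False
  | .dstit _ φ => NoCstit φ
  | .box φ => NoCstit φ

/-- `φ` contains no historic necessity operator. -/
def NoBox : Fml → Prop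
  | .atm _ => True
  | .neg φ => NoBox φ
  | .and φ ψ => NoBox φ ∧ NoBox ψ
  | .cstit _ φ => NoBox φ
  | .dstit _ φ => NoBox φ
  | .box _ => False

/-- All agents occurring in `φ` belong to `A`. -/
def AgentsIn (A : Set ℕ) : Fml → Prop
  | .atm _ => True
  | .neg φ => AgentsIn A φ
  | .and φ ψ => AgentsIn A φ ∧ AgentsIn A ψ
  | .cstit i φ => i ∈ A ∧ AgentsIn A φ
  | .dstit i φ => i ∈ A ∧ AgentsIn A φ
  | .box φ => AgentsIn A φ

/-- `A` is an initial segment `{0, 1, …}` of `ℕ`. -/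
def InitSeg (A : Set ℕ) : Prop := ∀ i ∈ A, ∀ j : ℕ, j ≤ i → j ∈ A

/-- A BT+AC model over the agent set `Agt`: a nonempty tree-like strict
order of moments, together with a choice function and a valuation.
Histories are represented as maximal chains (maximal linearly `<`-ordered
subsets) of moments; `Choice i w` is, for each agent `i ∈ Agt`, a partition
of the set `H_w` of histories passing through `w` into nonempty cells,
satisfying the superadditivity constraint (independence of agents). -/
structure BTAC (Agt : Set ℕ) where
  W : Type
  neW : Nonempty W
  lt : W → W → Prop
  lt_irrefl : ∀ w : W, ¬ lt w w
  lt_trans : ∀ {a b c : W}, lt a b → lt b c → lt a c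
  treelike : ∀ w₁ w₂ w₃ : W, lt w₁ w₃ → lt w₂ w₃ → w₁ = w₂ ∨ lt w₁ w₂ ∨ lt w₂ w₁
  Choice : ℕ → W → Set (Set (Set W))
  V : ℕ → W → Set W → Prop
  choice_hist : ∀ i ∈ Agt, ∀ w : W, ∀ Q ∈ Choice i w, ∀ h ∈ Q,
      IsMaxChain lt h ∧ w ∈ h
  choice_cell_nonempty : ∀ i ∈ Agt, ∀ w : W, ∀ Q ∈ Choice i w, Q.Nonempty
  choice_nonempty : ∀ i ∈ Agt, ∀ w : W, (Choice i w).Nonempty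
  choice_cover : ∀ i ∈ Agt, ∀ w : W, ∀ h : Set W,
      IsMaxChain lt h → w ∈ h → ∃ Q ∈ Choice i w, h ∈ Q
  choice_disjoint : ∀ i ∈ Agt, ∀ w : W, ∀ Q ∈ Choice i w, ∀ Q' ∈ Choice i w,
      (Q ∩ Q').Nonempty → Q = Q'
  superadd : ∀ w : W, ∀ s : ℕ → Set (Set W),
      (∀ i ∈ Agt, s i ∈ Choice i w) → (⋂ i ∈ Agt, s i).Nonempty

/-- Truth of a formula at an index `w/h` of a BT+AC model.  (`[i]φ` holds at
`w/h` iff `φ` holds at `w/h'` for every history `h'` in the cell of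
`Choice i w` containing `h`; `□φ` holds at `w/h` iff `φ` holds at `w/h'` for
every history `h'` through `w`; `[i dstit: φ]` additionally requires a
witness history through `w` where `φ` fails.) -/
def truth {Agt : Set ℕ} (M : BTAC Agt) : Fml → M.W → Set M.W → Prop
  | .atm p, w, h => M.V p w h
  | .neg φ, w, h => ¬ truth M φ w h
  | .and φ ψ, w, h => truth M φ w h ∧ truth M ψ w h
  | .cstit i φ, w, h =>
      ∀ h' : Set M.W, (∃ Q ∈ M.Choice i w, h ∈ Q ∧ h' ∈ Q) → truth M φ w h'
  | .dstit i φ, w, h =>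
      (∀ h' : Set M.W, (∃ Q ∈ M.Choice i w, h ∈ Q ∧ h' ∈ Q) → truth M φ w h') ∧
      (∃ h'' : Set M.W, IsMaxChain M.lt h'' ∧ w ∈ h'' ∧ ¬ truth M φ w h'')
  | .box φ, w, h =>
      ∀ h' : Set M.W, IsMaxChain M.lt h' → w ∈ h' → truth M φ w h'

/-- Validity in BT+AC structures over the agent set `Agt`: truth at every
index `w/h` (with `h` a history and `w ∈ h`) of every BT+AC model. -/
def validBTAC (Agt : Set ℕ) (φ : Fml) : Prop :=
  ∀ M : BTAC Agt, ∀ w : M.W, ∀ h : Set M.W,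
    IsMaxChain M.lt h → w ∈ h → truth M φ w h

/-- Satisfiability in BT+AC structures over the agent set `Agt`. -/
def satBTAC (Agt : Set ℕ) (φ : Fml) : Prop :=
  ∃ M : BTAC Agt, ∃ w : M.W, ∃ h : Set M.W,
    IsMaxChain M.lt h ∧ w ∈ h ∧ truth M φ w h

/-- A Kripke model over the agent set `Agt`: a nonempty set of worlds, an
equivalence relation `R i` for each agent `i ∈ Agt`, and a valuation. -/
structure KModel (Agt : Set ℕ) where
  W : Type
  neW : Nonempty W
  R : ℕ → W → W → Prop
  equiv : ∀ i ∈ Agt, Equivalence (R i)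
  V : ℕ → Set W

/-- The general permutation property: for all worlds `w, v` and agents
`l, m, n ∈ Agt`, if `⟨w,v⟩ ∈ R_l ∘ R_m` then there is `u` with `⟨w,u⟩ ∈ R_n`
and `⟨u,v⟩ ∈ R_i` for every agent `i ≠ n`. -/
def GenPerm {Agt : Set ℕ} (M : KModel Agt) : Prop :=
  ∀ w v : M.W, ∀ l ∈ Agt, ∀ m ∈ Agt, ∀ n ∈ Agt,
    Relation.Comp (M.R l) (M.R m) w v →
    ∃ u : M.W, M.R n w u ∧ ∀ i ∈ Agt, i ≠ n → M.R i u v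

/-- Truth in a Kripke model: `[i]` is interpreted by `R i`, and `□` by the
composition `R 1 ∘ R 0` (so that `Def(□)` holds). -/
def ktruth {Agt : Set ℕ} (M : KModel Agt) : Fml → M.W → Prop
  | .atm p, w => w ∈ M.V p
  | .neg φ, w => ¬ ktruth M φ w
  | .and φ ψ, w => ktruth M φ w ∧ ktruth M ψ w
  | .cstit i φ, w => ∀ u : M.W, M.R i w u → ktruth M φ u
  | .dstit i φ, w =>
      (∀ u : M.W, M.R i w u → ktruth M φ u) ∧
      (∃ u : M.W, Relation.Comp (M.R 1) (M.R 0) w u ∧ ¬ ktruth M φ u)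
  | .box φ, w => ∀ u : M.W, Relation.Comp (M.R 1) (M.R 0) w u → ktruth M φ u

/-- Validity in all Kripke models over `Agt` (with equivalence relations)
satisfying the general permutation property. -/
def validK (Agt : Set ℕ) (φ : Fml) : Prop :=
  ∀ M : KModel Agt, GenPerm M → ∀ w : M.W, ktruth M φ w

/-- Satisfiability in some Kripke model over `Agt` (with equivalence
relations) satisfying the general permutation property. -/
def satK (Agt : Set ℕ) (φ : Fml) : Prop :=
  ∃ M : KModel Agt, GenPerm M ∧ ∃ w : M.W, ktruth M φ w

/-- `φ` is (a substitution instance of) a propositional tautology: it is true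
under every assignment of truth values to formulas that respects `¬` and `∧`. -/
def Taut (φ : Fml) : Prop :=
  ∀ v : Fml → Prop,
    (∀ ψ : Fml, v (.neg ψ) ↔ ¬ v ψ) →
    (∀ ψ χ : Fml, v (.and ψ χ) ↔ (v ψ ∧ v χ)) →
    v φ

/-- The S5 axiom schemas (K, T and 5) for a box-like operator `op`. -/
def s5Set (op : Fml → Fml) : Set Fml :=
  {χ | (∃ φ ψ : Fml, χ = impF (op (impF φ ψ)) (impF (op φ) (op ψ))) ∨
       (∃ φ : Fml, χ = impF (op φ) φ) ∨
       (∃ φ : Fml, χ = impF (.neg (op (.neg φ))) (op (.neg (op (.neg φ)))))}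

/-- The schemas `(Incl_i) : □φ → [i]φ` for each agent `i ∈ Agt`. -/
def inclSet (Agt : Set ℕ) : Set Fml :=
  {χ | ∃ i ∈ Agt, ∃ φ : Fml, χ = impF (.box φ) (.cstit i φ)}

/-- The formula `(AAIA_k) : ◇φ → ⟨k⟩⋀_{0 ≤ i < k}⟨i⟩φ`. -/
def aaiaFml (k : ℕ) (φ : Fml) : Fml :=
  impF (diaF φ) (posF k (conjF ((List.range k).map (fun i => posF i φ))))

/-- The alternative independence schemas `(AAIA_k)` for all `k ≥ 1` with
agents `0, …, k ∈ Agt`. -/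
def aaiaSet (Agt : Set ℕ) : Set Fml :=
  {χ | ∃ k : ℕ, 1 ≤ k ∧ (∀ i ≤ k, i ∈ Agt) ∧ ∃ φ : Fml, χ = aaiaFml k φ}

/-- The formula `(AIA_k) : (◇[0]φ₀ ∧ … ∧ ◇[k]φₖ) → ◇([0]φ₀ ∧ … ∧ [k]φₖ)`. -/
def aiaFml (k : ℕ) (φs : ℕ → Fml) : Fml :=
  impF (conjF ((List.range (k+1)).map (fun i => diaF (.cstit i (φs i)))))
       (diaF (conjF ((List.range (k+1)).map (fun i => .cstit i (φs i)))))

/-- The formula `(GPerm_k) : ⟨l⟩⟨m⟩φ → ⟨n⟩⋀_{i ≤ k, i ≠ n}⟨i⟩φ`. -/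
def gpermFml (k l m n : ℕ) (φ : Fml) : Fml :=
  impF (posF l (posF m φ))
       (posF n (conjF (((List.range (k+1)).filter (fun i => i != n)).map
          (fun i => posF i φ))))

/-- The general permutation schemas `(GPerm_k)` for all `k ≥ 0` (with agents
`0, …, k ∈ Agt`) and agents `l, m, n ∈ Agt`. -/
def gpermSet (Agt : Set ℕ) : Set Fml :=
  {χ | ∃ k : ℕ, (∀ i ≤ k, i ∈ Agt) ∧
       ∃ l ∈ Agt, ∃ m ∈ Agt, ∃ n ∈ Agt, ∃ φ : Fml, χ = gpermFml k l m n φ}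

/-- The definition schema `Def(□) : □φ ↔ [1][0]φ`. -/
def defBoxSet : Set Fml :=
  {χ | ∃ φ : Fml, χ = iffF (.box φ) (.cstit 1 (.cstit 0 φ))}

/-- The alternative axiomatics of Section 3: `S5(□)`, `S5(i)` for each agent
`i ∈ Agt`, `(Incl_i)` and `(AAIA_k)`. -/
def xuAltAx (Agt : Set ℕ) : Set Fml :=
  s5Set Fml.box ∪ (⋃ i ∈ Agt, s5Set (fun φ => Fml.cstit i φ)) ∪
    inclSet Agt ∪ aaiaSet Agt

/-- The axiomatics of Section 4: `S5(i)` for each agent `i ∈ Agt`, `Def(□)`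
and `(GPerm_k)`. -/
def gpermAx (Agt : Set ℕ) : Set Fml :=
  (⋃ i ∈ Agt, s5Set (fun φ => Fml.cstit i φ)) ∪ defBoxSet ∪ gpermSet Agt

/-- Hilbert-style provability from the axiom set `Ax` (together with all
propositional tautologies) by modus ponens and `□`-necessitation. -/
inductive ProvB (Ax : Set Fml) : Fml → Prop
  | taut {φ : Fml} : Taut φ → ProvB Ax φ
  | axm {φ : Fml} : φ ∈ Ax → ProvB Ax φ
  | mp {φ ψ : Fml} : ProvB Ax (impF φ ψ) → ProvB Ax φ → ProvB Ax ψ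
  | nec {φ : Fml} : ProvB Ax φ → ProvB Ax (.box φ)

/-- Hilbert-style provability from the axiom set `Ax` (together with all
propositional tautologies) by modus ponens and `[i]`-necessitation for each
agent `i ∈ Agt`. -/
inductive ProvC (Agt : Set ℕ) (Ax : Set Fml) : Fml → Prop
  | taut {φ : Fml} : Taut φ → ProvC Agt Ax φ
  | axm {φ : Fml} : φ ∈ Ax → ProvC Agt Ax φ
  | mp {φ ψ : Fml} : ProvC Agt Ax (impF φ ψ) → ProvC Agt Ax φ → ProvC Agt Ax ψ
  | nec {i : ℕ} {φ : Fml} : i ∈ Agt → ProvC Agt Ax φ → ProvC Agt Ax (.cstit i φ)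

/-- The biimplication `B_ψ` relating the fresh atom `p_ψ` (given by `pA ψ`)
with `ψ`, used in the translation `tr` from `L_DSTIT` to `L_CSTIT`:
`B_{[i dstit: φ]} = (p_{[i dstit: φ]} ↔ [i]p_φ ∧ ¬□p_φ)`. -/
def Beq (pA : Fml → ℕ) : Fml → Fml
  | .atm q => iffF (.atm (pA (.atm q))) (.atm q)
  | .neg φ => iffF (.atm (pA (.neg φ))) (.neg (.atm (pA φ)))
  | .and φ ψ => iffF (.atm (pA (.and φ ψ))) (.and (.atm (pA φ)) (.atm (pA ψ)))
  | .cstit i φ => iffF (.atm (pA (.cstit i φ))) (.cstit i (.atm (pA φ)))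
  | .dstit i φ => iffF (.atm (pA (.dstit i φ)))
      (.and (.cstit i (.atm (pA φ))) (.neg (.box (.atm (pA φ)))))
  | .box φ => iffF (.atm (pA (.box φ))) (.box (.atm (pA φ)))

/-- The biimplication `B'_ψ` used in the translation `tr'` from `L_CSTIT` to
`L_DSTIT`: `B'_{[i]φ} = (p_{[i]φ} ↔ [i dstit: p_φ] ∨ □p_φ)`. -/
def Beq' (pA : Fml → ℕ) : Fml → Fml
  | .atm q => iffF (.atm (pA (.atm q))) (.atm q)
  | .neg φ => iffF (.atm (pA (.neg φ))) (.neg (.atm (pA φ)))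
  | .and φ ψ => iffF (.atm (pA (.and φ ψ))) (.and (.atm (pA φ)) (.atm (pA ψ)))
  | .cstit i φ => iffF (.atm (pA (.cstit i φ)))
      (orF (.dstit i (.atm (pA φ))) (.box (.atm (pA φ))))
  | .dstit i φ => iffF (.atm (pA (.dstit i φ))) (.dstit i (.atm (pA φ)))
  | .box φ => iffF (.atm (pA (.box φ))) (.box (.atm (pA φ)))

/-- The translation `tr(φ₀) = p_{φ₀} ∧ ⋀_{ψ ∈ sf(φ₀)} □B_ψ`. -/
noncomputable def tr (pA : Fml → ℕ) (φ0 : Fml) : Fml :=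
  .and (.atm (pA φ0)) (conjF ((sf φ0).toList.map (fun ψ => .box (Beq pA ψ))))

/-- The translation `tr'(φ₀) = p_{φ₀} ∧ ⋀_{ψ ∈ sf(φ₀)} □B'_ψ`. -/
noncomputable def tr' (pA : Fml → ℕ) (φ0 : Fml) : Fml :=
  .and (.atm (pA φ0)) (conjF ((sf φ0).toList.map (fun ψ => .box (Beq' pA ψ))))

/-- The atoms `p_ψ = pA ψ` for `ψ ∈ sf φ₀` are pairwise distinct and fresh
(none occurs in `φ₀`). -/
def Fresh (pA : Fml → ℕ) (φ0 : Fml) : Prop :=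
  Set.InjOn pA ↑(sf φ0) ∧ ∀ ψ ∈ sf φ0, pA ψ ∉ atoms φ0


lemma conj_truth {Agt : Set ℕ} (M : BTAC Agt) (l : List Fml) (w : M.W)
    (h : Set M.W) (hl : ∀ ψ ∈ l, truth M ψ w h) : truth M (conjF l) w h := by
  induction l with
  | nil =>
      simp only [conjF, impF, truth]
      tauto
  | cons ψ l ih =>
      cases l with
      | nil => exact hl ψ (by simp)
      | cons χ l' =>
          refine ⟨hl ψ (by simp), ih ?_⟩
          intro ρ hρ; exact hl ρ (List.mem_cons_of_mem _ hρ)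

/-- For every `k ≥ 1` (with agents `0, …, k ∈ Agt`), the
alternative axiom schema for independence of agents `(AAIA_k)`, namely
`◇φ → ⟨k⟩⋀_{0 ≤ i < k}⟨i⟩φ`, is valid in BT+AC structures. -/
theorem aaia_valid (Agt : Set ℕ) (hAgt : InitSeg Agt)
    (k : ℕ) (hk : 1 ≤ k) (hkAgt : ∀ i ≤ k, i ∈ Agt)
    (φ : Fml) (hφ : NoDstit φ) (hφA : AgentsIn Agt φ) :
    validBTAC Agt (aaiaFml k φ) := by
  intro M w h hh hwh
  have hkA : k ∈ Agt := hkAgt k le_rfl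
  simp only [aaiaFml, impF, diaF, posF, truth]
  rintro ⟨hdia, hneg⟩
  apply hneg; clear hneg
  -- extract a history h₀ through w where φ holds
  push_neg at hdia
  obtain ⟨h₀, hh₀, hw₀, hφ₀⟩ := hdia
  -- the cell of agent k containing h
  obtain ⟨Qk, hQk, hhQk⟩ := M.choice_cover k hkA w h hh hwh
  -- for each agent, the cell containing h₀
  have hsel : ∀ i : ℕ, ∃ Q : Set (Set M.W),
      i ∈ Agt → Q ∈ M.Choice i w ∧ h₀ ∈ Q := by
    intro i
    by_cases hi : i ∈ Agt
    · obtain ⟨Q, hQ, hQh⟩ := M.choice_cover i hi w h₀ hh₀ hw₀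
      exact ⟨Q, fun _ => ⟨hQ, hQh⟩⟩
    · exact ⟨∅, fun hmem => absurd hmem hi⟩
  choose s0 hs0 using hsel
  set s : ℕ → Set (Set M.W) := fun i => if i = k then Qk else s0 i with hs
  have hsmem : ∀ i ∈ Agt, s i ∈ M.Choice i w := by
    intro i hi
    by_cases hik : i = k
    · subst hik; simpa [hs] using hQk
    · simp [hs, hik, (hs0 i hi).1]
  obtain ⟨h', hh'⟩ := M.superadd w s hsmem
  have hh'mem : ∀ i ∈ Agt, h' ∈ s i := by
    intro i hi
    have := Set.mem_iInter.mp hh' i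
    exact Set.mem_iInter.mp this hi
  have hh'Qk : h' ∈ Qk := by
    have := hh'mem k hkA
    simpa [hs] using this
  intro H
  apply H h' ⟨Qk, hQk, hhQk, hh'Qk⟩
  apply conj_truth
  intro ψ hψ
  rw [List.mem_map] at hψ
  obtain ⟨i, hi, rfl⟩ := hψ
  rw [List.mem_range] at hi
  have hiA : i ∈ Agt := hkAgt i (le_of_lt hi)
  have hik : i ≠ k := Nat.ne_of_lt hi
  have hh'si : h' ∈ s0 i := by
    have := hh'mem i hiA
    simpa [hs, hik] using this
  simp only [posF, truth]
  intro H'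
  exact H' h₀ ⟨s0 i, (hs0 i hiA).1, hh'si, (hs0 i hiA).2⟩ hφ₀

end STIT
end

section
/- For every k ≥ 0 and all agents l, m, n ∈ Agt, the general permutation schema (GPerm_k), namely ⟨l⟩⟨m⟩φ → ⟨n⟩⋀_{i ≤ k, i ≠ n}⟨i⟩φ, is valid in BT+AC structures: every instance is true at every index w/h of every BT+AC model. -/
/-! Common infrastructure for STIT logic (Chellas STIT, deliberative STIT,
historic necessity), following Balbiani, Herzig & Troquard,
"Alternative axiomatics and complexity of deliberative STIT theories". -/

namespace STIT

lemma truth_conjF {Agt : Set ℕ} (M : BTAC Agt) (L : List Fml) (w : M.W)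
    (h : Set M.W) : truth M (conjF L) w h ↔ ∀ ψ ∈ L, truth M ψ w h := by
  induction L with
  | nil => simp [conjF, impF, truth]
  | cons a tl ih =>
    cases tl with
    | nil => simp [conjF]
    | cons b l =>
      rw [show conjF (a :: b :: l) = .and a (conjF (b :: l)) from rfl]
      simp only [truth, ih, List.mem_cons]
      constructor
      · rintro ⟨ha, hrest⟩ ψ (rfl | hψ)
        · exact ha
        · exact hrest ψ hψ
      · intro hall
        exact ⟨hall a (Or.inl rfl), fun ψ hψ => hall ψ (Or.inr hψ)⟩

/-- For every `k ≥ 0` and all agents `l, m, n ∈ Agt`, the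
general permutation schema `(GPerm_k)`, namely
`⟨l⟩⟨m⟩φ → ⟨n⟩⋀_{i ≤ k, i ≠ n}⟨i⟩φ`, is valid in BT+AC structures. -/
theorem gperm_valid (Agt : Set ℕ) (hAgt : InitSeg Agt)
    (k : ℕ) (hkAgt : ∀ i ≤ k, i ∈ Agt)
    (l m n : ℕ) (hl : l ∈ Agt) (hm : m ∈ Agt) (hn : n ∈ Agt)
    (φ : Fml) (hφ : NoDstit φ) (hφA : AgentsIn Agt φ) :
    validBTAC Agt (gpermFml k l m n φ) := by
  classical
  intro M w h hchain hwh
  simp only [gpermFml, impF, truth, posF, not_and, not_not, not_forall]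
  intro hyp
  classical
  obtain ⟨h', _, h'', ⟨Qm, hQm, hh'Qm, hh''Qm⟩, hφh''⟩ := hyp
  obtain ⟨hchain'', hwh''⟩ := M.choice_hist m hm w Qm hQm h'' hh''Qm
  obtain ⟨Qn, hQn, hhQn⟩ := M.choice_cover n hn w h hchain hwh
  set s : ℕ → Set (Set M.W) := fun i =>
    if i = n then Qn
    else if hi : i ∈ Agt then
      Classical.choose (M.choice_cover i hi w h'' hchain'' hwh'')
    else ∅ with hs
  have hsel : ∀ i ∈ Agt, s i ∈ M.Choice i w := by
    intro i hi
    by_cases hin : i = n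
    · subst hin; simp [hs, hQn]
    · simp only [hs, hin, if_false, dif_pos hi]
      exact (Classical.choose_spec (M.choice_cover i hi w h'' hchain'' hwh'')).1
  have hsel'' : ∀ i ∈ Agt, i ≠ n → h'' ∈ s i := by
    intro i hi hin
    simp only [hs, hin, if_false, dif_pos hi]
    exact (Classical.choose_spec (M.choice_cover i hi w h'' hchain'' hwh'')).2
  obtain ⟨hstar, hhstar⟩ := M.superadd w s hsel
  simp only [Set.mem_iInter] at hhstar
  have hstarQn : hstar ∈ Qn := by simpa [hs] using hhstar n hn
  refine ⟨hstar, ⟨Qn, hQn, hhQn, hstarQn⟩, ?_⟩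
  rw [truth_conjF]
  intro ψ hψ
  simp only [List.mem_map, List.mem_filter, List.mem_range] at hψ
  obtain ⟨i, ⟨hik, hine⟩, rfl⟩ := hψ
  have hine' : i ≠ n := by simpa using hine
  have hiA : i ∈ Agt := hkAgt i (Nat.lt_succ_iff.mp hik)
  simp only [truth, not_forall]
  exact ⟨h'', ⟨⟨s i, hsel i hiA, hhstar i hiA, hsel'' i hiA hine'⟩, by simpa [truth] using hφh''⟩⟩

end STIT
end

section
/- In the Hilbert system whose axioms are all propositional tautologies, the S5 axiom schemas S5(i) for each operator [i], the definition schema Def(□): □φ ↔ [1][0]φ, and the general permutation schemas (GPerm_k): ⟨l⟩⟨m⟩φ → ⟨n⟩⋀_{i ≤ k, i ≠ n}⟨i⟩φ for all k and all agents l,m,n, with rules modus ponens and [i]-necessitation for each agent i: (1) every instance of the S5 axiom schemas for □ is provable; (2) every instance of (Incl_i): □φ → [i]φ is provable; (3) every instance of (AAIA_k): ◇φ → ⟨k⟩⋀_{0 ≤ i < k}⟨i⟩φ is provable; and (4) the rule of □-necessitation is derivable (if φ is provable then □φ is provable). -/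
/-! Common infrastructure for STIT logic (Chellas STIT, deliberative STIT,
historic necessity), following Balbiani, Herzig & Troquard,
"Alternative axiomatics and complexity of deliberative STIT theories". -/

namespace STIT

namespace GP

open Fml

variable {Agt : Set ℕ}

/-- Abbreviation for provability in the GPerm system. -/
abbrev Pr (Agt : Set ℕ) (φ : Fml) : Prop := ProvC Agt (gpermAx Agt) φ

lemma axS5 {i : ℕ} (hi : i ∈ Agt) {χ : Fml}
    (h : χ ∈ s5Set (fun φ => Fml.cstit i φ)) : Pr Agt χ :=
  ProvC.axm (Set.mem_union_left _ (Set.mem_union_left _ (Set.mem_biUnion hi h)))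

lemma axK {i : ℕ} (hi : i ∈ Agt) (φ ψ : Fml) :
    Pr Agt (impF (.cstit i (impF φ ψ)) (impF (.cstit i φ) (.cstit i ψ))) :=
  axS5 hi (Or.inl ⟨φ, ψ, rfl⟩)

lemma axT {i : ℕ} (hi : i ∈ Agt) (φ : Fml) :
    Pr Agt (impF (.cstit i φ) φ) :=
  axS5 hi (Or.inr (Or.inl ⟨φ, rfl⟩))

lemma ax5 {i : ℕ} (hi : i ∈ Agt) (φ : Fml) :
    Pr Agt (impF (posF i φ) (.cstit i (posF i φ))) :=
  axS5 hi (Or.inr (Or.inr ⟨φ, rfl⟩))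

lemma axDef (φ : Fml) :
    Pr Agt (iffF (.box φ) (.cstit 1 (.cstit 0 φ))) :=
  ProvC.axm (Set.mem_union_left _ (Set.mem_union_right _ ⟨φ, rfl⟩))

lemma axGP {k l m n : ℕ} (hk : ∀ i ≤ k, i ∈ Agt) (hl : l ∈ Agt)
    (hm : m ∈ Agt) (hn : n ∈ Agt) (φ : Fml) :
    Pr Agt (gpermFml k l m n φ) :=
  ProvC.axm (Set.mem_union_right _ ⟨k, hk, l, hl, m, hm, n, hn, φ, rfl⟩)

lemma syll {a b c : Fml} (h1 : Pr Agt (impF a b)) (h2 : Pr Agt (impF b c)) :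
    Pr Agt (impF a c) :=
  ProvC.mp (ProvC.mp
    (ProvC.taut (by intro v hn ha; simp only [impF, hn, ha]; tauto)) h1) h2

lemma cpos {a b : Fml} (h : Pr Agt (impF a b)) :
    Pr Agt (impF (.neg b) (.neg a)) :=
  ProvC.mp (ProvC.taut (by intro v hn ha; simp only [impF, hn, ha]; tauto)) h

lemma iffL {a b : Fml} (h : Pr Agt (iffF a b)) : Pr Agt (impF a b) :=
  ProvC.mp (ProvC.taut (by intro v hn ha; simp only [iffF, impF, hn, ha]; tauto)) h

lemma iffR {a b : Fml} (h : Pr Agt (iffF a b)) : Pr Agt (impF b a) :=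
  ProvC.mp (ProvC.taut (by intro v hn ha; simp only [iffF, impF, hn, ha]; tauto)) h

lemma dnegI (a : Fml) : Pr Agt (impF a (.neg (.neg a))) :=
  ProvC.taut (by intro v hn ha; simp only [impF, hn, ha]; tauto)

lemma dnegE (a : Fml) : Pr Agt (impF (.neg (.neg a)) a) :=
  ProvC.taut (by intro v hn ha; simp only [impF, hn, ha]; tauto)

lemma mono {i : ℕ} (hi : i ∈ Agt) {a b : Fml} (h : Pr Agt (impF a b)) :
    Pr Agt (impF (.cstit i a) (.cstit i b)) :=
  ProvC.mp (axK hi a b) (ProvC.nec hi h)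

lemma dmono {i : ℕ} (hi : i ∈ Agt) {a b : Fml} (h : Pr Agt (impF a b)) :
    Pr Agt (impF (posF i a) (posF i b)) :=
  cpos (mono hi (cpos h))

lemma dT {i : ℕ} (hi : i ∈ Agt) (φ : Fml) : Pr Agt (impF φ (posF i φ)) :=
  ProvC.mp
    (ProvC.taut (by intro v hn ha; simp only [impF, posF, hn, ha]; tauto))
    (axT hi (.neg φ))

lemma bAx {i : ℕ} (hi : i ∈ Agt) (φ : Fml) :
    Pr Agt (impF φ (.cstit i (posF i φ))) :=
  syll (dT hi φ) (ax5 hi φ)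

lemma dbox {i : ℕ} (hi : i ∈ Agt) (φ : Fml) :
    Pr Agt (impF (posF i (.cstit i φ)) (.cstit i φ)) := by
  have a1 : Pr Agt (impF (posF i (.neg φ)) (.neg (.cstit i φ))) :=
    cpos (mono hi (dnegI φ))
  have s2 : Pr Agt (impF (posF i (.neg φ)) (.cstit i (.neg (.cstit i φ)))) :=
    syll (ax5 hi (.neg φ)) (mono hi a1)
  have s3 := cpos s2
  exact syll s3 (syll (dnegE (.cstit i (.neg (.neg φ)))) (mono hi (dnegE φ)))

lemma four {i : ℕ} (hi : i ∈ Agt) (φ : Fml) :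
    Pr Agt (impF (.cstit i φ) (.cstit i (.cstit i φ))) :=
  syll (bAx hi (.cstit i φ)) (mono hi (dbox hi φ))

lemma dcollapse {i : ℕ} (hi : i ∈ Agt) (φ : Fml) :
    Pr Agt (impF (posF i (posF i φ)) (posF i φ)) := by
  have g : Pr Agt (impF (.cstit i (.neg φ)) (.cstit i (.neg (posF i φ)))) :=
    syll (four hi (.neg φ)) (mono hi (dnegI (.cstit i (.neg φ))))
  exact cpos g

lemma taut_conjF_imp {x : Fml} : ∀ {L : List Fml}, x ∈ L → Taut (impF (conjF L) x)
  | [], h => by simp at h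
  | [y], h => by
      simp only [List.mem_singleton] at h; subst h
      intro v hn ha; simp only [conjF, impF, hn, ha]; tauto
  | y :: z :: L, h => by
      rcases List.mem_cons.mp h with rfl | h'
      · intro v hn ha
        show v (impF (conjF (x :: z :: L)) x)
        have e : conjF (x :: z :: L) = .and x (conjF (z :: L)) := rfl
        rw [e]; simp only [impF, hn, ha]; tauto
      · have ih := taut_conjF_imp (L := z :: L) h'
        intro v hn ha
        have hv := ih v hn ha
        have e : conjF (y :: z :: L) = .and y (conjF (z :: L)) := rfl
        show v (impF (conjF (y :: z :: L)) x)
        rw [e]; simp only [impF, hn, ha] at hv ⊢; tauto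

lemma inclDual (hAgt : InitSeg Agt) (h1 : 1 ∈ Agt) {i : ℕ} (hi : i ∈ Agt)
    (ψ : Fml) : Pr Agt (impF (posF i ψ) (posF 1 (posF 0 ψ))) := by
  have hkA : max i 1 ∈ Agt := by
    rcases le_total i 1 with h | h
    · rw [max_eq_right h]; exact h1
    · rw [max_eq_left h]; exact hi
  have hk : ∀ j ≤ max i 1, j ∈ Agt := fun j hj => hAgt _ hkA j hj
  have g := axGP hk hi hi h1 ψ
  simp only [gpermFml] at g
  have mem : posF 0 ψ ∈ (((List.range (max i 1 + 1)).filter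
      (fun j => j != 1)).map (fun j => posF j ψ)) :=
    List.mem_map.mpr ⟨0, List.mem_filter.mpr
      ⟨List.mem_range.mpr (Nat.succ_pos _), by decide⟩, rfl⟩
  exact syll (dT hi (posF i ψ)) (syll g (dmono h1 (ProvC.taut (taut_conjF_imp mem))))

lemma incl (hAgt : InitSeg Agt) (h1 : 1 ∈ Agt) {i : ℕ} (hi : i ∈ Agt)
    (φ : Fml) : Pr Agt (impF (.box φ) (.cstit i φ)) := by
  have h0 : (0 : ℕ) ∈ Agt := hAgt 1 h1 0 (Nat.zero_le 1)
  have c2 := cpos (inclDual hAgt h1 hi (.neg φ))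
  have d1 : Pr Agt (impF (.cstit 0 φ) (.neg (posF 0 (.neg φ)))) :=
    syll (mono h0 (dnegI φ)) (dnegI (.cstit 0 (.neg (.neg φ))))
  have d4 : Pr Agt (impF (.cstit 1 (.cstit 0 φ)) (.neg (posF 1 (posF 0 (.neg φ))))) :=
    syll (mono h1 d1) (dnegI (.cstit 1 (.neg (posF 0 (.neg φ)))))
  have d6 : Pr Agt (impF (.neg (posF i (.neg φ))) (.cstit i φ)) :=
    syll (dnegE (.cstit i (.neg (.neg φ)))) (mono hi (dnegE φ))
  exact syll (iffL (axDef φ)) (syll d4 (syll c2 d6))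

lemma diaD (h1 : 1 ∈ Agt) (φ : Fml) :
    Pr Agt (impF (diaF φ) (posF 1 (posF 0 φ))) := by
  have e0 := cpos (Agt := Agt) (iffR (axDef (.neg φ)))
  have e1 : Pr Agt (impF (.neg (.cstit 1 (.cstit 0 (.neg φ)))) (posF 1 (posF 0 φ))) :=
    cpos (mono h1 (dnegE (.cstit 0 (.neg φ))))
  exact syll e0 e1

lemma dD (h1 : 1 ∈ Agt) (φ : Fml) :
    Pr Agt (impF (posF 1 (posF 0 φ)) (diaF φ)) := by
  have f1 : Pr Agt (impF (posF 1 (posF 0 φ)) (.neg (.cstit 1 (.cstit 0 (.neg φ))))) :=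
    cpos (mono h1 (dnegI (.cstit 0 (.neg φ))))
  exact syll f1 (cpos (iffL (axDef (.neg φ))))

lemma dDcoll (hAgt : InitSeg Agt) (h1 : 1 ∈ Agt) (ψ : Fml) :
    Pr Agt (impF (posF 0 (posF 1 (posF 0 ψ))) (posF 1 (posF 0 ψ))) := by
  have h0 : (0 : ℕ) ∈ Agt := hAgt 1 h1 0 (Nat.zero_le 1)
  have hk : ∀ j ≤ 1, j ∈ Agt := fun j hj => hAgt 1 h1 j hj
  have g := axGP hk h0 h1 h1 (posF 0 ψ)
  have e : gpermFml 1 0 1 1 (posF 0 ψ) =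
      impF (posF 0 (posF 1 (posF 0 ψ))) (posF 1 (posF 0 (posF 0 ψ))) := rfl
  rw [e] at g
  exact syll g (dmono h1 (dcollapse h0 ψ))

lemma D0 (hAgt : InitSeg Agt) (h1 : 1 ∈ Agt) (φ : Fml) :
    Pr Agt (impF (posF 1 (posF 0 φ)) (.cstit 0 (posF 1 (posF 0 φ)))) := by
  have h0 : (0 : ℕ) ∈ Agt := hAgt 1 h1 0 (Nat.zero_le 1)
  exact syll (dT h0 _) (syll (ax5 h0 _) (mono h0 (dDcoll hAgt h1 φ)))

lemma fiveBox (hAgt : InitSeg Agt) (h1 : 1 ∈ Agt) (φ : Fml) :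
    Pr Agt (impF (diaF φ) (.box (diaF φ))) := by
  have h0 : (0 : ℕ) ∈ Agt := hAgt 1 h1 0 (Nat.zero_le 1)
  have e3 : Pr Agt (impF (posF 1 (posF 0 φ))
      (.cstit 1 (.cstit 0 (posF 1 (posF 0 φ))))) :=
    syll (ax5 h1 (posF 0 φ)) (mono h1 (D0 hAgt h1 φ))
  have e4 := mono h1 (mono h0 (dD h1 φ))
  exact syll (diaD h1 φ) (syll e3 (syll e4 (iffR (axDef (diaF φ)))))

lemma filter_range_succ (k : ℕ) :
    (List.range (k + 1)).filter (fun i => i != k) = List.range k := by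
  rw [List.range_succ, List.filter_append]
  have h2 : List.filter (fun i => i != k) [k] = [] := by simp
  rw [h2, List.append_nil]
  apply List.filter_eq_self.mpr
  intro a ha
  simp only [ne_eq, bne_iff_ne]
  exact Nat.ne_of_lt (List.mem_range.mp ha)

end GP


/-- In the Hilbert system with all propositional tautologies,
the S5 schemas `S5(i)` for each `[i]`, `Def(□) : □φ ↔ [1][0]φ`, and the
general permutation schemas `(GPerm_k)`, with rules modus ponens and
`[i]`-necessitation: (1) every instance of the S5 axiom schemas for `□`
(K, T and 5) is provable; (2) every instance of `(Incl_i) : □φ → [i]φ` is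
provable; (3) every instance of `(AAIA_k) : ◇φ → ⟨k⟩⋀_{0 ≤ i < k}⟨i⟩φ` is
provable; and (4) the rule of `□`-necessitation is derivable. -/
theorem gperm_system_derivations (Agt : Set ℕ) (hAgt : InitSeg Agt)
    (h1 : 1 ∈ Agt) :
    ((∀ φ ψ : Fml, NoDstit φ → AgentsIn Agt φ → NoDstit ψ → AgentsIn Agt ψ →
        ProvC Agt (gpermAx Agt)
          (impF (.box (impF φ ψ)) (impF (.box φ) (.box ψ)))) ∧
     (∀ φ : Fml, NoDstit φ → AgentsIn Agt φ →
        ProvC Agt (gpermAx Agt) (impF (.box φ) φ)) ∧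
     (∀ φ : Fml, NoDstit φ → AgentsIn Agt φ →
        ProvC Agt (gpermAx Agt) (impF (diaF φ) (.box (diaF φ)))))
    ∧
    (∀ i ∈ Agt, ∀ φ : Fml, NoDstit φ → AgentsIn Agt φ →
        ProvC Agt (gpermAx Agt) (impF (.box φ) (.cstit i φ)))
    ∧
    (∀ k : ℕ, 1 ≤ k → (∀ i ≤ k, i ∈ Agt) →
      ∀ φ : Fml, NoDstit φ → AgentsIn Agt φ →
        ProvC Agt (gpermAx Agt) (aaiaFml k φ))
    ∧
    (∀ φ : Fml, ProvC Agt (gpermAx Agt) φ →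
        ProvC Agt (gpermAx Agt) (.box φ)) := by
  have h0 : (0 : ℕ) ∈ Agt := hAgt 1 h1 0 (Nat.zero_le 1)
  refine ⟨⟨?_, ?_, ?_⟩, ?_, ?_, ?_⟩
  · intro φ ψ _ _ _ _
    have s : ProvC Agt (gpermAx Agt) (impF (.box (impF φ ψ))
        (impF (.cstit 1 (.cstit 0 φ)) (.cstit 1 (.cstit 0 ψ)))) :=
      GP.syll (GP.syll (GP.iffL (GP.axDef (impF φ ψ)))
        (GP.mono h1 (GP.axK h0 φ ψ))) (GP.axK h1 (.cstit 0 φ) (.cstit 0 ψ))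
    have h3 := GP.iffL (Agt := Agt) (GP.axDef φ)
    have h4 := GP.iffR (Agt := Agt) (GP.axDef ψ)
    have t : Taut (impF
        (impF (.box (impF φ ψ)) (impF (.cstit 1 (.cstit 0 φ)) (.cstit 1 (.cstit 0 ψ))))
        (impF (impF (.box φ) (.cstit 1 (.cstit 0 φ)))
          (impF (impF (.cstit 1 (.cstit 0 ψ)) (.box ψ))
            (impF (.box (impF φ ψ)) (impF (.box φ) (.box ψ)))))) := by
      intro v hn ha; simp only [impF, hn, ha]; tauto
    exact ProvC.mp (ProvC.mp (ProvC.mp (ProvC.taut t) s) h3) h4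
  · intro φ _ _
    exact GP.syll (GP.syll (GP.iffL (GP.axDef φ))
      (GP.axT h1 (.cstit 0 φ))) (GP.axT h0 φ)
  · intro φ _ _
    exact GP.fiveBox hAgt h1 φ
  · intro i hi φ _ _
    exact GP.incl hAgt h1 hi φ
  · intro k hk1 hk φ _ _
    have g := GP.axGP hk (hk 1 hk1) (hk 0 (Nat.zero_le k)) (hk k le_rfl) φ
    simp only [gpermFml, GP.filter_range_succ] at g
    show ProvC Agt (gpermAx Agt) (impF (diaF φ)
      (posF k (conjF ((List.range k).map (fun i => posF i φ)))))
    exact GP.syll (GP.diaD h1 φ) g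
  · intro φ h
    exact ProvC.mp (GP.iffR (GP.axDef φ)) (ProvC.nec h1 (ProvC.nec h0 h))

end STIT
end

section
/- Every instance of the Church–Rosser schema ⟨0⟩[1]φ → [1]⟨0⟩φ is provable from the axiom schemas S5(0), S5(1) and (GPerm_1): ⟨l⟩⟨m⟩φ → ⟨n⟩⋀_{i ≤ 1, i ≠ n}⟨i⟩φ, by the rules of modus ponens and [i]-necessitation. -/
/-! Common infrastructure for STIT logic (Chellas STIT, deliberative STIT,
historic necessity), following Balbiani, Herzig & Troquard,
"Alternative axiomatics and complexity of deliberative STIT theories". -/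

namespace STIT

section CRaux

/-- The axiom set for Statement 9. -/
def AxCR : Set Fml :=
  s5Set (fun ψ => Fml.cstit 0 ψ) ∪ s5Set (fun ψ => Fml.cstit 1 ψ) ∪
    {χ | ∃ l ∈ ({0, 1} : Set ℕ), ∃ m ∈ ({0, 1} : Set ℕ),
         ∃ n ∈ ({0, 1} : Set ℕ), ∃ ψ : Fml, χ = gpermFml 1 l m n ψ}

local notation "P" => ProvC ({0, 1} : Set ℕ) AxCR

lemma mem01 (i : ℕ) (h : i = 0 ∨ i = 1) : i ∈ ({0, 1} : Set ℕ) := by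
  rcases h with h | h <;> simp [h]

/-- Hypothetical syllogism. -/
lemma hs {a b c : Fml} (h1 : P (impF a b)) (h2 : P (impF b c)) : P (impF a c) := by
  refine ProvC.mp (ProvC.mp (ProvC.taut ?_) h1) h2
  intro v hn ha
  simp only [impF, hn, ha]
  tauto

/-- Contraposition. -/
lemma contrap {a b : Fml} (h : P (impF a b)) : P (impF (.neg b) (.neg a)) := by
  refine ProvC.mp (ProvC.taut ?_) h
  intro v hn ha
  simp only [impF, hn, ha]
  tauto

/-- From `⊢ ¬a → b` infer `⊢ ¬b → a`. -/
lemma contrap' {a b : Fml} (h : P (impF (.neg a) b)) : P (impF (.neg b) a) := by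
  refine ProvC.mp (ProvC.taut ?_) h
  intro v hn ha
  simp only [impF, hn, ha]
  tauto

/-- From `⊢ a → ¬b` infer `⊢ b → ¬a`. -/
lemma contrap'' {a b : Fml} (h : P (impF a (.neg b))) : P (impF b (.neg a)) := by
  refine ProvC.mp (ProvC.taut ?_) h
  intro v hn ha
  simp only [impF, hn, ha]
  tauto

lemma s5K (i : ℕ) (hi : i = 0 ∨ i = 1) (a b : Fml) :
    P (impF (.cstit i (impF a b)) (impF (.cstit i a) (.cstit i b))) := by
  apply ProvC.axm
  rcases hi with h | h <;> subst h
  · exact Or.inl (Or.inl (Or.inl ⟨a, b, rfl⟩))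
  · exact Or.inl (Or.inr (Or.inl ⟨a, b, rfl⟩))

lemma s5T (i : ℕ) (hi : i = 0 ∨ i = 1) (a : Fml) :
    P (impF (.cstit i a) a) := by
  apply ProvC.axm
  rcases hi with h | h <;> subst h
  · exact Or.inl (Or.inl (Or.inr (Or.inl ⟨a, rfl⟩)))
  · exact Or.inl (Or.inr (Or.inr (Or.inl ⟨a, rfl⟩)))

lemma s5Five (i : ℕ) (hi : i = 0 ∨ i = 1) (a : Fml) :
    P (impF (posF i a) (.cstit i (posF i a))) := by
  apply ProvC.axm
  rcases hi with h | h <;> subst h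
  · exact Or.inl (Or.inl (Or.inr (Or.inr ⟨a, rfl⟩)))
  · exact Or.inl (Or.inr (Or.inr (Or.inr ⟨a, rfl⟩)))

/-- Monotonicity of `[i]`. -/
lemma monoBox (i : ℕ) (hi : i = 0 ∨ i = 1) {a b : Fml} (h : P (impF a b)) :
    P (impF (.cstit i a) (.cstit i b)) :=
  ProvC.mp (s5K i hi a b) (ProvC.nec (mem01 i hi) h)

/-- Monotonicity of `⟨i⟩`. -/
lemma monoDia (i : ℕ) (hi : i = 0 ∨ i = 1) {a b : Fml} (h : P (impF a b)) :
    P (impF (posF i a) (posF i b)) :=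
  contrap (monoBox i hi (contrap h))

/-- T-dual: `a → ⟨i⟩a`. -/
lemma tDual (i : ℕ) (hi : i = 0 ∨ i = 1) (a : Fml) : P (impF a (posF i a)) :=
  contrap'' (s5T i hi (.neg a))

/-- B axiom: `a → [i]⟨i⟩a`. -/
lemma axB (i : ℕ) (hi : i = 0 ∨ i = 1) (a : Fml) :
    P (impF a (.cstit i (posF i a))) :=
  hs (tDual i hi a) (s5Five i hi a)

/-- Dual residuation rule: from `⊢ ⟨i⟩a → b` infer `⊢ a → [i]b`. -/
lemma diaRule (i : ℕ) (hi : i = 0 ∨ i = 1) {a b : Fml}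
    (h : P (impF (posF i a) b)) : P (impF a (.cstit i b)) :=
  hs (axB i hi a) (monoBox i hi h)

/-- `⟨i⟩[i]a → a`. -/
lemma diaBoxT (i : ℕ) (hi : i = 0 ∨ i = 1) (a : Fml) :
    P (impF (posF i (.cstit i a)) a) := by
  -- contrapositive: ¬a → [i]¬[i]a
  have h1 : P (impF (.neg a) (.cstit i (posF i (.neg a)))) := axB i hi (.neg a)
  -- [i]¬[i]¬¬a → [i]¬[i]a
  have h2 : P (impF (.cstit i (posF i (.neg a))) (.cstit i (.neg (.cstit i a)))) := by
    apply monoBox i hi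
    apply contrap
    apply monoBox i hi
    refine ProvC.taut ?_
    intro v hn ha
    simp only [impF, hn, ha]
    tauto
  have h3 : P (impF (.neg a) (.cstit i (.neg (.cstit i a)))) := hs h1 h2
  -- posF i (cstit i a) = ¬[i]¬[i]a
  exact contrap' h3

/-- The GPerm₁ instance `⟨1⟩⟨0⟩ψ → ⟨0⟩⟨1⟩ψ`. -/
lemma gperm100 (ψ : Fml) :
    P (impF (posF 1 (posF 0 ψ)) (posF 0 (posF 1 ψ))) := by
  have : impF (posF 1 (posF 0 ψ)) (posF 0 (posF 1 ψ)) = gpermFml 1 1 0 0 ψ := by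
    simp [gpermFml, conjF, List.range_succ]
  rw [this]
  exact ProvC.axm (Or.inr ⟨1, by simp, 0, by simp, 0, by simp, ψ, rfl⟩)

end CRaux

/-- Every instance of the Church–Rosser schema
`⟨0⟩[1]φ → [1]⟨0⟩φ` is provable from the axiom schemas `S5(0)`, `S5(1)` and
`(GPerm_1) : ⟨l⟩⟨m⟩φ → ⟨n⟩⋀_{i ≤ 1, i ≠ n}⟨i⟩φ`, by the rules of modus
ponens and `[i]`-necessitation. -/
theorem church_rosser_provable (φ : Fml) (hφb : NoBox φ) (hφd : NoDstit φ)
    (hφA : AgentsIn {0, 1} φ) :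
    ProvC {0, 1}
      (s5Set (fun ψ => Fml.cstit 0 ψ) ∪ s5Set (fun ψ => Fml.cstit 1 ψ) ∪
        {χ | ∃ l ∈ ({0, 1} : Set ℕ), ∃ m ∈ ({0, 1} : Set ℕ),
             ∃ n ∈ ({0, 1} : Set ℕ), ∃ ψ : Fml, χ = gpermFml 1 l m n ψ})
      (impF (posF 0 (.cstit 1 φ)) (.cstit 1 (posF 0 φ))) := by
  show ProvC _ AxCR _
  -- ⟨1⟩⟨0⟩[1]φ → ⟨0⟩⟨1⟩[1]φ  (GPerm₁)
  have h1 := gperm100 (Fml.cstit 1 φ)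
  -- ⟨1⟩[1]φ → φ, hence ⟨0⟩⟨1⟩[1]φ → ⟨0⟩φ
  have h2 : ProvC {0, 1} AxCR (impF (posF 0 (posF 1 (.cstit 1 φ))) (posF 0 φ)) :=
    monoDia 0 (Or.inl rfl) (diaBoxT 1 (Or.inr rfl) φ)
  -- ⟨1⟩⟨0⟩[1]φ → ⟨0⟩φ
  have h3 := hs h1 h2
  -- residuate: ⟨0⟩[1]φ → [1]⟨0⟩φ
  exact diaRule 1 (Or.inr rfl) h3

end STIT
end

section
/- Let M = ⟨W,R,V⟩ be a Kripke model in which each R_i (i ∈ Agt) is an equivalence relation on W and R satisfies the general permutation property. Then for all agents i, j ∈ Agt with i ≠ j, R_i ∘ R_j = R_1 ∘ R_0. -/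
/-! Common infrastructure for STIT logic (Chellas STIT, deliberative STIT,
historic necessity), following Balbiani, Herzig & Troquard,
"Alternative axiomatics and complexity of deliberative STIT theories". -/

namespace STIT

/-- Let `M = ⟨W,R,V⟩` be a Kripke model in which each `R i`
(`i ∈ Agt`) is an equivalence relation and `R` satisfies the general
permutation property. Then for all agents `i, j ∈ Agt` with `i ≠ j`,
`R_i ∘ R_j = R_1 ∘ R_0`. -/
theorem comp_eq_comp_one_zero (Agt : Set ℕ) (hAgt : InitSeg Agt)
    (h1 : 1 ∈ Agt) (M : KModel Agt) (hgp : GenPerm M)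
    (i j : ℕ) (hi : i ∈ Agt) (hj : j ∈ Agt) (hij : i ≠ j) :
    Relation.Comp (M.R i) (M.R j) = Relation.Comp (M.R 1) (M.R 0) := by
  have h0 : (0:ℕ) ∈ Agt := hAgt 1 h1 0 (by norm_num)
  have key : ∀ a ∈ Agt, ∀ b ∈ Agt, ∀ c ∈ Agt, ∀ d ∈ Agt, c ≠ d →
      ∀ w v, Relation.Comp (M.R a) (M.R b) w v → Relation.Comp (M.R c) (M.R d) w v := by
    intro a ha b hb c hc d hd hcd w v hwv
    obtain ⟨u, hcu, hall⟩ := hgp w v a ha b hb c hc hwv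
    exact ⟨u, hcu, hall d hd (Ne.symm hcd)⟩
  funext w v
  simp only [eq_iff_iff]
  constructor
  · exact key i hi j hj 1 h1 0 h0 (by norm_num) w v
  · exact key 1 h1 0 h0 i hi j hj hij w v

end STIT
end

section
/- Let M = ⟨W,R,V⟩ be a Kripke model in which each R_i (i ∈ Agt) is an equivalence relation on W and R satisfies the general permutation property. Then for all agents i, j ∈ Agt, the composed relation R_i ∘ R_j is an equivalence relation on W. -/
/-! Common infrastructure for STIT logic (Chellas STIT, deliberative STIT,
historic necessity), following Balbiani, Herzig & Troquard,
"Alternative axiomatics and complexity of deliberative STIT theories". -/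

namespace STIT

/-- Let `M = ⟨W,R,V⟩` be a Kripke model in which each `R i`
(`i ∈ Agt`) is an equivalence relation and `R` satisfies the general
permutation property. Then for all agents `i, j ∈ Agt`, the composed
relation `R_i ∘ R_j` is an equivalence relation on `W`. -/
theorem comp_equivalence (Agt : Set ℕ) (hAgt : InitSeg Agt)
    (h1 : 1 ∈ Agt) (M : KModel Agt) (hgp : GenPerm M)
    (i j : ℕ) (hi : i ∈ Agt) (hj : j ∈ Agt) :
    Equivalence (Relation.Comp (M.R i) (M.R j)) := by
  have hei := M.equiv i hi
  have hej := M.equiv j hj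
  constructor
  · intro w
    exact ⟨w, hei.refl w, hej.refl w⟩
  · rintro w v ⟨x, hwx, hxv⟩
    by_cases hij : i = j
    · subst hij
      exact ⟨v, hei.refl v, hei.symm (hei.trans hwx hxv)⟩
    · obtain ⟨u, hwu, hu⟩ := hgp w v i hi j hj j hj ⟨x, hwx, hxv⟩
      exact ⟨u, hei.symm (hu i hi hij), hej.symm hwu⟩
  · rintro w v z ⟨x, hwx, hxv⟩ ⟨y, hvy, hyz⟩
    by_cases hij : i = j
    · subst hij
      exact ⟨x, hwx, hei.trans hxv (hei.trans hvy hyz)⟩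
    · obtain ⟨u, hxu, hu⟩ := hgp x y j hj i hi i hi ⟨v, hxv, hvy⟩
      exact ⟨u, hei.trans hwx hxu, hej.trans (hu j hj (Ne.symm hij)) hyz⟩

end STIT
end

section
/- Let M = ⟨W,R,V⟩ be a Kripke model in which each R_i (i ∈ Agt) is an equivalence relation on W and R satisfies the general permutation property. Then the reflexive–transitive closure of the union ⋃_{i∈Agt} R_i equals R_0 ∘ R_1, which in turn equals R_1 ∘ R_0. -/
/-! Common infrastructure for STIT logic (Chellas STIT, deliberative STIT,
historic necessity), following Balbiani, Herzig & Troquard,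
"Alternative axiomatics and complexity of deliberative STIT theories". -/

namespace STIT

/-- Let `M = ⟨W,R,V⟩` be a Kripke model in which each `R i`
(`i ∈ Agt`) is an equivalence relation and `R` satisfies the general
permutation property. Then the reflexive–transitive closure of
`⋃_{i ∈ Agt} R_i` equals `R_0 ∘ R_1`, which in turn equals `R_1 ∘ R_0`. -/
theorem rtc_union_eq_comp (Agt : Set ℕ) (hAgt : InitSeg Agt)
    (h1 : 1 ∈ Agt) (M : KModel Agt) (hgp : GenPerm M) :
    Relation.ReflTransGen (fun w v => ∃ i ∈ Agt, M.R i w v) =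
      Relation.Comp (M.R 0) (M.R 1) ∧
    Relation.Comp (M.R 0) (M.R 1) = Relation.Comp (M.R 1) (M.R 0) := by
  have h0 : (0 : ℕ) ∈ Agt := hAgt 1 h1 0 (by omega)
  have e0 := M.equiv 0 h0
  have e1 := M.equiv 1 h1
  have comm : Relation.Comp (M.R 0) (M.R 1) = Relation.Comp (M.R 1) (M.R 0) := by
    funext w v
    apply propext
    constructor
    · rintro ⟨x, h01, h12⟩
      obtain ⟨u, hwu, huv⟩ := hgp w v 0 h0 1 h1 1 h1 ⟨x, h01, h12⟩
      exact ⟨u, hwu, huv 0 h0 (by omega)⟩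
    · rintro ⟨x, h01, h12⟩
      obtain ⟨u, hwu, huv⟩ := hgp w v 1 h1 0 h0 0 h0 ⟨x, h01, h12⟩
      exact ⟨u, hwu, huv 1 h1 (by omega)⟩
  have incl : ∀ i ∈ Agt, ∀ w v, M.R i w v → Relation.Comp (M.R 0) (M.R 1) w v := by
    intro i hi w v hwv
    obtain ⟨u, hwu, huv⟩ := hgp w v i hi i hi 0 h0
      ⟨v, hwv, (M.equiv i hi).refl v⟩
    exact ⟨u, hwu, huv 1 h1 (by omega)⟩
  have trans : ∀ w v z, Relation.Comp (M.R 0) (M.R 1) w v →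
      Relation.Comp (M.R 0) (M.R 1) v z → Relation.Comp (M.R 0) (M.R 1) w z := by
    rintro w v z ⟨x, hwx, hxv⟩ ⟨y, hvy, hyz⟩
    have hxy : Relation.Comp (M.R 1) (M.R 0) x y := ⟨v, hxv, hvy⟩
    rw [← comm] at hxy
    obtain ⟨u, hxu, huy⟩ := hxy
    exact ⟨u, e0.trans hwx hxu, e1.trans huy hyz⟩
  refine ⟨?_, comm⟩
  funext w v
  apply propext
  constructor
  · intro h
    induction h with
    | refl => exact ⟨w, e0.refl w, e1.refl w⟩
    | tail _ hstep ih =>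
        obtain ⟨i, hi, hR⟩ := hstep
        exact trans _ _ _ ih (incl i hi _ _ hR)
  · rintro ⟨x, hwx, hxv⟩
    exact Relation.ReflTransGen.tail
      (Relation.ReflTransGen.single ⟨0, h0, hwx⟩) ⟨1, h1, hxv⟩

end STIT
end
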